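/- Fix a > 1, Q > 0, ε ∈ (0,1), and s ∈ [ε, 2ε]. For N ∈ ℕ, ξ ∈ [−1,1], and t_N = s/(a·N^{a−1}), define θ(ξ) = −N^{1/2}·s·ξ + N·s + t_N·((N − N^{1/2}ξ)² + Q²/4)^{a/2}. Then |θ'(ξ)| ≥ ε·N^{1/2} for all ξ ∈ [−1,1] and all N ≥ 2. -/

import Mathlib

theorem nonstationary_phase_first_derivative (a Q ε s : ℝ) (ha : 1 < a) (hQ : 0 < Q)
    (hε0 : 0 < ε) (hε1 : ε < 1) (hs : s ∈ Set.Icc ε (2 * ε)) :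
    ∀ N : ℕ, 2 ≤ N → ∀ ξ ∈ Set.Icc (-1 : ℝ) 1,
      ε * Real.sqrt N ≤
        |deriv (fun x : ℝ => -Real.sqrt N * s * x + N * s +
          (s / (a * (N : ℝ) ^ (a - 1))) *
            (((N : ℝ) - Real.sqrt N * x) ^ 2 + Q ^ 2 / 4) ^ (a / 2)) ξ| := by
  intro N hN ξ hξ
  have hN0 : (0:ℝ) < N := by exact_mod_cast lt_of_lt_of_le (by norm_num) hN
  have hN1 : (1:ℝ) ≤ N := by exact_mod_cast le_trans (by norm_num) hN
  set c := Real.sqrt N with hc_def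
  have hc : 0 < c := Real.sqrt_pos.mpr hN0
  have hs0 : 0 < s := lt_of_lt_of_le hε0 hs.1
  set t := s / (a * (N : ℝ) ^ (a - 1)) with ht_def
  have ht0 : 0 < t := by
    apply div_pos hs0
    positivity
  have hu : 0 < ((N:ℝ) - c * ξ) ^ 2 + Q ^ 2 / 4 := by positivity
  have hg : HasDerivAt (fun x : ℝ => (N:ℝ) - c * x) (-c) ξ := by
    simpa using ((hasDerivAt_id ξ).const_mul c).const_sub (N:ℝ)
  have hu' : HasDerivAt (fun x : ℝ => ((N:ℝ) - c * x) ^ 2 + Q ^ 2 / 4)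
      (2 * ((N:ℝ) - c * ξ) * (-c)) ξ := by
    simpa using (hg.pow 2).add_const (Q ^ 2 / 4)
  have hr : HasDerivAt (fun x : ℝ => (((N:ℝ) - c * x) ^ 2 + Q ^ 2 / 4) ^ (a / 2))
      ((2 * ((N:ℝ) - c * ξ) * (-c)) * (a / 2) *
        ((((N:ℝ) - c * ξ) ^ 2 + Q ^ 2 / 4) ^ (a / 2 - 1))) ξ :=
    hu'.rpow_const (Or.inl hu.ne')
  have h1 : HasDerivAt (fun x : ℝ => -c * s * x) (-c * s) ξ := by
    simpa using (hasDerivAt_id ξ).const_mul (-c * s)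
  have hD : HasDerivAt (fun x : ℝ => -c * s * x + (N:ℝ) * s +
      t * ((((N:ℝ) - c * x) ^ 2 + Q ^ 2 / 4) ^ (a / 2)))
      (-c * s + t * ((2 * ((N:ℝ) - c * ξ) * (-c)) * (a / 2) *
        ((((N:ℝ) - c * ξ) ^ 2 + Q ^ 2 / 4) ^ (a / 2 - 1)))) ξ :=
    (h1.add_const ((N:ℝ) * s)).add (hr.const_mul t)
  rw [hD.deriv]
  set P := (((N:ℝ) - c * ξ) ^ 2 + Q ^ 2 / 4) ^ (a / 2 - 1) with hP_def
  have hP0 : 0 ≤ P := Real.rpow_nonneg hu.le _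
  have hNc : 0 ≤ (N:ℝ) - c * ξ := by
    have h1 : c * ξ ≤ c := by
      nlinarith [hξ.2, hc.le]
    have hc1 : 1 ≤ c := by
      rw [hc_def, show (1:ℝ) = Real.sqrt 1 by simp]
      exact Real.sqrt_le_sqrt hN1
    nlinarith [Real.sq_sqrt hN0.le]
  have key : -c * s + t * ((2 * ((N:ℝ) - c * ξ) * (-c)) * (a / 2) * P)
      = -(c * (s + t * a * ((N:ℝ) - c * ξ) * P)) := by ring
  rw [key, abs_neg, abs_of_nonneg (by positivity)]
  have : ε ≤ s + t * a * ((N:ℝ) - c * ξ) * P := by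
    have : 0 ≤ t * a * ((N:ℝ) - c * ξ) * P := by positivity
    linarith [hs.1]
  nlinarith [hc]
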